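/- Suppose V_K^{xx} = Σᵢ₌₁ᴺ yⁱ (yⁱ)ᵀ is a sum of N rank-one terms, Fₓ, Fᵤ are matrices, M is symmetric positive definite, and define Qₓₓ = Fₓᵀ V Fₓ, Qₓᵤ = Fₓᵀ V Fᵤ with V = Σᵢ rⁱ(rⁱ)ᵀ. Then the matrix W := Qₓₓ - Qₓᵤ M⁻¹ Qᵤₓ (with Qᵤₓ = Qₓᵤᵀ) is symmetric of rank at most N, and if W is positive semidefinite it admits a factorization W = Σᵢ₌₁ᴺ r̃ⁱ(r̃ⁱ)ᵀ for some vectors r̃ⁱ. -/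
import Mathlib

open Matrix

/-- Higher-rank extension of Proposition 3: if the value Hessian
`V = Σᵢ rⁱ (rⁱ)ᵀ` is a sum of `N` rank-one terms, `M` is symmetric positive
definite, `Qxx = Fxᵀ V Fx`, `Qxu = Fxᵀ V Fu`, then `W = Qxx - Qxu M⁻¹ Qxuᵀ` is
symmetric of rank at most `N`, and when `W` is positive semidefinite it again
factors as a sum of `N` outer products. -/
theorem stmt5 (n m N : ℕ) (r : Fin N → Fin n → ℝ)
    (Fx : Matrix (Fin n) (Fin n) ℝ) (Fu : Matrix (Fin n) (Fin m) ℝ)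
    (M : Matrix (Fin m) (Fin m) ℝ) (hM : M.PosDef)
    (V : Matrix (Fin n) (Fin n) ℝ) (hV : V = ∑ i, vecMulVec (r i) (r i))
    (Qxx : Matrix (Fin n) (Fin n) ℝ) (hQxx : Qxx = Fxᵀ * V * Fx)
    (Qxu : Matrix (Fin n) (Fin m) ℝ) (hQxu : Qxu = Fxᵀ * V * Fu)
    (W : Matrix (Fin n) (Fin n) ℝ) (hW : W = Qxx - Qxu * M⁻¹ * Qxuᵀ) :
    W.IsSymm ∧ W.rank ≤ N ∧
    (W.PosSemidef → ∃ rt : Fin N → Fin n → ℝ, W = ∑ i, vecMulVec (rt i) (rt i)) := by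
  -- V is symmetric
  have hVsymm : Vᵀ = V := by
    rw [hV]
    ext x y
    simp [Matrix.transpose_apply, Matrix.sum_apply, vecMulVec_apply, mul_comm]
  -- M⁻¹ is symmetric
  have hMsymm : Mᵀ = M := hM.1
  have hMinv : (M⁻¹)ᵀ = M⁻¹ := by
    rw [transpose_nonsing_inv, hMsymm]
  -- symmetry of W
  have hWsymm : W.IsSymm := by
    unfold Matrix.IsSymm
    rw [hW, transpose_sub, hQxx, hQxu]
    simp only [transpose_mul, transpose_transpose, hVsymm, hMinv, Matrix.mul_assoc]
  -- V = Aᵀ * A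
  set A : Matrix (Fin N) (Fin n) ℝ := Matrix.of r with hA
  have hVA : V = Aᵀ * A := by
    rw [hV]
    ext x y
    simp [mul_apply, vecMulVec_apply, Matrix.sum_apply, hA]
  -- W as (A*Fx)ᵀ * C
  have hWfac : W = (A * Fx)ᵀ *
      (A * Fx - A * Fu * M⁻¹ * (A * Fu)ᵀ * (A * Fx)) := by
    rw [hW, hQxx, hQxu, hVA, Matrix.mul_sub]
    simp only [transpose_mul, transpose_transpose, Matrix.mul_assoc]
  have hrank : W.rank ≤ N := by
    rw [hWfac]
    calc ((A * Fx)ᵀ * (A * Fx - A * Fu * M⁻¹ * (A * Fu)ᵀ * (A * Fx))).rank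
        ≤ ((A * Fx)ᵀ).rank := rank_mul_le_left _ _
      _ ≤ Fintype.card (Fin N) := rank_le_card_width _
      _ = N := Fintype.card_fin N
  refine ⟨hWsymm, hrank, fun hPSD => ?_⟩
  -- spectral decomposition
  have hHerm : W.IsHermitian := hPSD.1
  set lam := hHerm.eigenvalues with hlam
  have hlam_nonneg : ∀ i, 0 ≤ lam i := fun i => hPSD.eigenvalues_nonneg i
  set U : Matrix (Fin n) (Fin n) ℝ := (hHerm.eigenvectorUnitary : Matrix (Fin n) (Fin n) ℝ)
    with hU
  have hspec : W = U * diagonal (RCLike.ofReal ∘ lam) * star U := hHerm.spectral_theorem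
  have hWsum : W = ∑ j : Fin n, lam j • vecMulVec (fun x => U x j) (fun x => U x j) := by
    rw [hspec]
    ext x y
    simp only [mul_apply, diagonal_apply, Function.comp_apply, RCLike.ofReal_real_eq_id, id_eq,
      star_apply, star_trivial, Matrix.sum_apply, Matrix.smul_apply, vecMulVec_apply,
      smul_eq_mul, mul_ite, mul_zero, Finset.sum_ite_eq', Finset.mem_univ, if_true]
    exact Finset.sum_congr rfl fun j _ => by ring
  -- number of nonzero eigenvalues ≤ N
  have hcard : Fintype.card {i // lam i ≠ 0} ≤ N := by
    rw [← hHerm.rank_eq_card_non_zero_eigs]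
    exact hrank
  obtain ⟨f⟩ : Nonempty ({i // lam i ≠ 0} ↪ Fin N) :=
    Function.Embedding.nonempty_of_card_le (by simpa using hcard)
  -- define the vectors
  set v : {i // lam i ≠ 0} → Fin n → ℝ :=
    fun j => Real.sqrt (lam j.1) • (fun x => U x j.1) with hv
  set rt : Fin N → Fin n → ℝ := Function.extend f v 0 with hrt
  refine ⟨rt, ?_⟩
  have hrt_range : ∀ j, rt (f j) = v j := fun j => f.injective.extend_apply v 0 j
  have hrt_zero : ∀ k, k ∉ Finset.univ.image f → rt k = 0 := by
    intro k hk
    apply Function.extend_apply'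
    rintro ⟨j, rfl⟩
    exact hk (Finset.mem_image.mpr ⟨j, Finset.mem_univ j, rfl⟩)
  have step1 : ∑ k : Fin N, vecMulVec (rt k) (rt k)
      = ∑ k ∈ Finset.univ.image f, vecMulVec (rt k) (rt k) := by
    symm
    apply Finset.sum_subset (Finset.subset_univ _)
    intro k _ hk
    rw [hrt_zero k hk]
    ext x y
    simp [vecMulVec_apply]
  have step2 : ∑ k ∈ Finset.univ.image f, vecMulVec (rt k) (rt k)
      = ∑ j : {i // lam i ≠ 0}, vecMulVec (v j) (v j) := by
    rw [Finset.sum_image (fun a _ b _ h => f.injective h)]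
    exact Finset.sum_congr rfl fun j _ => by rw [hrt_range j]
  have step3 : ∀ j : {i // lam i ≠ 0},
      vecMulVec (v j) (v j) = lam j.1 • vecMulVec (fun x => U x j.1) (fun x => U x j.1) := by
    intro j
    ext x y
    simp only [hv, vecMulVec_apply, Matrix.smul_apply, Pi.smul_apply, smul_eq_mul]
    rw [show Real.sqrt (lam j.1) * U x j.1 * (Real.sqrt (lam j.1) * U y j.1)
        = (Real.sqrt (lam j.1) * Real.sqrt (lam j.1)) * (U x j.1 * U y j.1) by ring,
      Real.mul_self_sqrt (hlam_nonneg j.1)]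
  have step4 : ∑ j : {i // lam i ≠ 0}, lam j.1 • vecMulVec (fun x => U x j.1) (fun x => U x j.1)
      = ∑ j : Fin n, lam j • vecMulVec (fun x => U x j) (fun x => U x j) := by
    rw [← Finset.sum_subtype (Finset.univ.filter fun i => lam i ≠ 0) (by simp)
      (fun j => lam j • vecMulVec (fun x => U x j) (fun x => U x j))]
    exact Finset.sum_filter_of_ne fun j _ hne hl => hne (by rw [hl, zero_smul])
  rw [hWsum, step1, step2]
  rw [Finset.sum_congr rfl fun j _ => step3 j, step4]
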